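/- For every n ≥ 2 and every even integer d ≥ 2, the SONC cone C_{n,d} is not closed under multiplication: there exist polynomials p₁, p₂ ∈ C_{n,d} such that the product p₁·p₂ does not belong to C_{n,2d}. -/

import Mathlib

open MvPolynomial Finset
open scoped Classical

noncomputable section

/-- A circuit polynomial in `n` variables. -/
def IsCircuitPoly (n : ℕ) (f : MvPolynomial (Fin n) ℝ) : Prop :=
  ∃ (r : ℕ) (α : Fin (r + 1) → (Fin n →₀ ℕ)) (β : Fin n →₀ ℕ)
    (cf : Fin (r + 1) → ℝ) (c : ℝ) (lam : Fin (r + 1) → ℝ),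
    r ≤ n ∧
    (∀ j, 0 < cf j) ∧
    (∀ j i, Even (α j i)) ∧
    AffineIndependent ℝ (fun j (i : Fin n) => ((α j i : ℕ) : ℝ)) ∧
    (∀ j, 0 < lam j) ∧ (∑ j, lam j) = 1 ∧
    (∀ i, ((β i : ℕ) : ℝ) = ∑ j, lam j * ((α j i : ℕ) : ℝ)) ∧
    f = (∑ j, monomial (α j) (cf j)) + monomial β c

/-- A nonnegative circuit polynomial. -/
def IsNNCircuit (n : ℕ) (f : MvPolynomial (Fin n) ℝ) : Prop :=
  IsCircuitPoly n f ∧ ∀ x : Fin n → ℝ, 0 ≤ eval x f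

/-- A sum of nonnegative circuit polynomials (no degree bound). -/
def IsSONC (n : ℕ) (f : MvPolynomial (Fin n) ℝ) : Prop :=
  ∃ (k : ℕ) (μ : Fin k → ℝ) (p : Fin k → MvPolynomial (Fin n) ℝ),
    (∀ i, 0 ≤ μ i) ∧ (∀ i, IsNNCircuit n (p i)) ∧
    f = ∑ i, C (μ i) * p i

/-- A SONC built from nonnegative circuit polynomials of degree at most `D`. -/
def IsSONCOfDeg (n D : ℕ) (f : MvPolynomial (Fin n) ℝ) : Prop :=
  ∃ (k : ℕ) (μ : Fin k → ℝ) (p : Fin k → MvPolynomial (Fin n) ℝ),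
    (∀ i, 0 ≤ μ i) ∧ (∀ i, IsNNCircuit n (p i) ∧ (p i).totalDegree ≤ D) ∧
    f = ∑ i, C (μ i) * p i

/-- The SONC cone `C_{n,D}`. -/
def InSONCCone (n D : ℕ) (f : MvPolynomial (Fin n) ℝ) : Prop :=
  f.totalDegree ≤ D ∧ IsSONCOfDeg n D f

namespace SONCAux

variable {n : ℕ}

/-- The weight of an exponent vector: max of two point evaluations. -/
def wt (xp xm : Fin n → ℝ) (γ : Fin n →₀ ℕ) : ℝ :=
  max (γ.prod fun i k => xp i ^ k) (γ.prod fun i k => xm i ^ k)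

/-- The linear functional `p ↦ ∑_γ coeff γ p * wt γ`. -/
def L (xp xm : Fin n → ℝ) : MvPolynomial (Fin n) ℝ →+ ℝ :=
  (Finsupp.liftAddHom (fun γ => AddMonoidHom.mulRight (wt xp xm γ)) :
    ((Fin n →₀ ℕ) →₀ ℝ) →+ ℝ).comp AddMonoidAlgebra.coeffAddEquiv.toAddMonoidHom

lemma L_monomial (xp xm : Fin n → ℝ) (e : Fin n →₀ ℕ) (c : ℝ) :
    L xp xm (monomial e c) = c * wt xp xm e := by
  rw [← single_eq_monomial]
  show (Finsupp.liftAddHom fun γ => AddMonoidHom.mulRight (wt xp xm γ)) (Finsupp.single e c)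
      = c * wt xp xm e
  rw [Finsupp.liftAddHom_apply, Finsupp.sum_single_index (by exact map_zero _)]
  rfl

lemma L_eq (xp xm : Fin n → ℝ) (p : MvPolynomial (Fin n) ℝ) :
    L xp xm p = ∑ γ ∈ p.support, coeff γ p * wt xp xm γ := rfl

lemma prod_pow_single (x : Fin n → ℝ) (j : Fin n) (m : ℕ) :
    (Finsupp.single j m).prod (fun i k => x i ^ k) = x j ^ m :=
  Finsupp.prod_single_index (pow_zero _)

lemma prod_pow_add (x : Fin n → ℝ) (f g : Fin n →₀ ℕ) :
    (f + g).prod (fun i k => x i ^ k)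
      = f.prod (fun i k => x i ^ k) * g.prod (fun i k => x i ^ k) :=
  Finsupp.prod_add_index' (fun _ => pow_zero _) (fun _ b c => pow_add _ b c)

/-- Key lemma: L is nonnegative on any nonnegative polynomial with at most one
negative coefficient. -/
lemma L_nonneg (xp xm : Fin n → ℝ) (p : MvPolynomial (Fin n) ℝ)
    (hnn : ∀ x, 0 ≤ eval x p) (β : Fin n →₀ ℕ)
    (hc : ∀ γ, γ ≠ β → 0 ≤ coeff γ p) : 0 ≤ L xp xm p := by
  rw [L_eq]
  rcases le_total (β.prod fun i k => xm i ^ k) (β.prod fun i k => xp i ^ k) with h | h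
  · calc (0:ℝ) ≤ eval xp p := hnn xp
      _ = ∑ γ ∈ p.support, coeff γ p * γ.prod (fun i k => xp i ^ k) := rfl
      _ ≤ ∑ γ ∈ p.support, coeff γ p * wt xp xm γ := by
        refine Finset.sum_le_sum fun γ _ => ?_
        by_cases hγ : γ = β
        · subst hγ
          exact le_of_eq (by rw [wt, max_eq_left h])
        · exact mul_le_mul_of_nonneg_left (le_max_left _ _) (hc γ hγ)
  · calc (0:ℝ) ≤ eval xm p := hnn xm
      _ = ∑ γ ∈ p.support, coeff γ p * γ.prod (fun i k => xm i ^ k) := rfl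
      _ ≤ ∑ γ ∈ p.support, coeff γ p * wt xp xm γ := by
        refine Finset.sum_le_sum fun γ _ => ?_
        by_cases hγ : γ = β
        · subst hγ
          exact le_of_eq (by rw [wt, max_eq_right h])
        · exact mul_le_mul_of_nonneg_left (le_max_right _ _) (hc γ hγ)

end SONCAux

/-- For every n ≥ 2 and every even integer d ≥ 2, the SONC cone
`C_{n,d}` is not closed under multiplication: there exist `p₁, p₂ ∈ C_{n,d}`
such that `p₁ * p₂ ∉ C_{n,2d}`. -/
theorem sonc_cone_not_closed_under_multiplication :
    ∀ n : ℕ, 2 ≤ n → ∀ d : ℕ, Even d → 2 ≤ d →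
    ∃ p₁ p₂ : MvPolynomial (Fin n) ℝ,
      InSONCCone n d p₁ ∧ InSONCCone n d p₂ ∧ ¬ InSONCCone n (2 * d) (p₁ * p₂) := by
  intro n hn d hd hd2
  obtain ⟨a, rfl⟩ := hd
  have ha : 1 ≤ a := by omega
  set i0 : Fin n := ⟨0, by omega⟩ with hi0
  set i1 : Fin n := ⟨1, by omega⟩ with hi1
  have hne : i0 ≠ i1 := by
    simp only [hi0, hi1, ne_eq, Fin.mk.injEq]
    omega
  set e1 : Fin n →₀ ℕ := Finsupp.single i0 (a + a) with he1
  set e2 : Fin n →₀ ℕ := Finsupp.single i1 (a + a) with he2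
  set e3 : Fin n →₀ ℕ := Finsupp.single i0 a + Finsupp.single i1 a with he3
  set q : MvPolynomial (Fin n) ℝ :=
    monomial e1 1 + monomial e2 1 + monomial e3 (-2) with hq
  -- total degree bound
  have hd1 : (monomial e1 (1 : ℝ)).totalDegree ≤ a + a := by
    refine le_trans (totalDegree_monomial_le _ _) ?_
    rw [he1, Finsupp.sum_single_index rfl]
    exact le_rfl
  have hd2' : (monomial e2 (1 : ℝ)).totalDegree ≤ a + a := by
    refine le_trans (totalDegree_monomial_le _ _) ?_
    rw [he2, Finsupp.sum_single_index rfl]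
    exact le_rfl
  have hd3 : (monomial e3 (-2 : ℝ)).totalDegree ≤ a + a := by
    refine le_trans (totalDegree_monomial_le _ _) ?_
    rw [he3, Finsupp.sum_add_index' (fun _ => rfl) (fun _ b c => rfl),
      Finsupp.sum_single_index rfl, Finsupp.sum_single_index rfl]
    simp
  have hqdeg : q.totalDegree ≤ a + a := by
    rw [hq]
    refine le_trans (totalDegree_add _ _) (max_le (le_trans (totalDegree_add _ _)
      (max_le hd1 hd2')) hd3)
  -- q is a nonnegative circuit polynomial
  have hqnn : ∀ x : Fin n → ℝ, 0 ≤ eval x q := by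
    intro x
    have : eval x q = (x i0 ^ a - x i1 ^ a) ^ 2 := by
      rw [hq]
      simp only [map_add, eval_monomial, he1, he2, he3, SONCAux.prod_pow_add,
        SONCAux.prod_pow_single, pow_add]
      ring
    rw [this]
    positivity
  have hcirc : IsNNCircuit n q := by
    refine ⟨⟨1, ![e1, e2], e3, fun _ => 1, -2, fun _ => 1 / 2, by omega,
      fun _ => one_pos, ?_, ?_, fun _ => by norm_num, ?_, ?_, ?_⟩, hqnn⟩
    · -- even exponents
      intro j i
      have key : ∀ jj : Fin n, Even ((Finsupp.single jj (a + a)) i) := by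
        intro jj
        rw [Finsupp.single_apply]
        split
        · exact ⟨a, rfl⟩
        · exact Even.zero
      fin_cases j
      · exact key i0
      · exact key i1
    · -- affine independence
      have hfam : (fun (j : Fin 2) (i : Fin n) => ((![e1, e2] j i : ℕ) : ℝ))
          = ![fun i => ((e1 i : ℕ) : ℝ), fun i => ((e2 i : ℕ) : ℝ)] := by
        funext j i
        fin_cases j <;> simp
      rw [hfam]
      refine affineIndependent_of_ne ℝ ?_
      intro hcon
      have := congrFun hcon i0
      rw [he1, he2, Finsupp.single_apply, Finsupp.single_apply, if_pos rfl,
        if_neg (Ne.symm hne)] at this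
      have : (a + a : ℕ) = 0 := by exact_mod_cast this
      omega
    · -- sum of lambdas
      rw [Fin.sum_univ_two]
      norm_num
    · -- beta is the convex combination
      intro i
      rw [Fin.sum_univ_two]
      simp only [Matrix.cons_val_zero, Matrix.cons_val_one, Matrix.head_cons, he1, he2, he3,
        Finsupp.add_apply, Finsupp.single_apply]
      by_cases h0 : i0 = i <;> by_cases h1 : i1 = i
      · exact absurd (h0.trans h1.symm) hne
      · simp only [if_pos h0, if_neg h1]
        push_cast
        ring
      · simp only [if_neg h0, if_pos h1]
        push_cast
        ring
      · simp only [if_neg h0, if_neg h1]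
        norm_num
    · -- representation
      rw [Fin.sum_univ_two, hq]
      simp
  have hqcone : InSONCCone n (a + a) q := by
    refine ⟨hqdeg, 1, fun _ => 1, fun _ => q, fun _ => one_pos.le,
      fun _ => ⟨hcirc, hqdeg⟩, ?_⟩
    simp
  refine ⟨q, q, hqcone, hqcone, ?_⟩
  -- the product is not in the SONC cone of degree 2d
  rintro ⟨-, k, μ, p, hμ, hp, heq⟩
  set u : ℝ := (2 : ℝ) ^ (((a + a : ℕ) : ℝ))⁻¹ with hu
  have hu0 : 0 < u := Real.rpow_pos_of_pos (by norm_num) _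
  have hud : u ^ (a + a) = 2 := by
    rw [hu]
    exact Real.rpow_inv_natCast_pow (by norm_num) (by omega)
  set xp : Fin n → ℝ := fun i => if i = i0 then u else if i = i1 then u⁻¹ else 1 with hxp
  set xm : Fin n → ℝ := fun i => if i = i0 then u⁻¹ else if i = i1 then u else 1 with hxm
  have hxpi0 : xp i0 = u := by rw [hxp]; simp
  have hxpi1 : xp i1 = u⁻¹ := by rw [hxp]; simp [Ne.symm hne, hne]
  have hxmi0 : xm i0 = u⁻¹ := by rw [hxm]; simp
  have hxmi1 : xm i1 = u := by rw [hxm]; simp [Ne.symm hne, hne]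
  have hA1 : e1.prod (fun i k => xp i ^ k) = 2 := by
    rw [he1, SONCAux.prod_pow_single, hxpi0, hud]
  have hA2 : e2.prod (fun i k => xp i ^ k) = 2⁻¹ := by
    rw [he2, SONCAux.prod_pow_single, hxpi1, inv_pow, hud]
  have hA3 : e3.prod (fun i k => xp i ^ k) = 1 := by
    rw [he3, SONCAux.prod_pow_add, SONCAux.prod_pow_single, SONCAux.prod_pow_single,
      hxpi0, hxpi1, inv_pow]
    exact mul_inv_cancel₀ (pow_ne_zero _ hu0.ne')
  have hB1 : e1.prod (fun i k => xm i ^ k) = 2⁻¹ := by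
    rw [he1, SONCAux.prod_pow_single, hxmi0, inv_pow, hud]
  have hB2 : e2.prod (fun i k => xm i ^ k) = 2 := by
    rw [he2, SONCAux.prod_pow_single, hxmi1, hud]
  have hB3 : e3.prod (fun i k => xm i ^ k) = 1 := by
    rw [he3, SONCAux.prod_pow_add, SONCAux.prod_pow_single, SONCAux.prod_pow_single,
      hxmi0, hxmi1, inv_pow]
    exact inv_mul_cancel₀ (pow_ne_zero _ hu0.ne')
  have hw : ∀ f g : Fin n →₀ ℕ, SONCAux.wt xp xm (f + g)
      = max ((f.prod fun i k => xp i ^ k) * (g.prod fun i k => xp i ^ k))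
            ((f.prod fun i k => xm i ^ k) * (g.prod fun i k => xm i ^ k)) := by
    intro f g
    rw [SONCAux.wt, SONCAux.prod_pow_add, SONCAux.prod_pow_add]
  have hw11 : SONCAux.wt xp xm (e1 + e1) = 4 := by rw [hw, hA1, hB1]; norm_num
  have hw12 : SONCAux.wt xp xm (e1 + e2) = 1 := by rw [hw, hA1, hA2, hB1, hB2]; norm_num
  have hw13 : SONCAux.wt xp xm (e1 + e3) = 2 := by rw [hw, hA1, hA3, hB1, hB3]; norm_num
  have hw21 : SONCAux.wt xp xm (e2 + e1) = 1 := by rw [hw, hA1, hA2, hB1, hB2]; norm_num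
  have hw22 : SONCAux.wt xp xm (e2 + e2) = 4 := by rw [hw, hA2, hB2]; norm_num
  have hw23 : SONCAux.wt xp xm (e2 + e3) = 2 := by rw [hw, hA2, hA3, hB2, hB3]; norm_num
  have hw31 : SONCAux.wt xp xm (e3 + e1) = 2 := by rw [hw, hA1, hA3, hB1, hB3]; norm_num
  have hw32 : SONCAux.wt xp xm (e3 + e2) = 2 := by rw [hw, hA2, hA3, hB2, hB3]; norm_num
  have hw33 : SONCAux.wt xp xm (e3 + e3) = 1 := by rw [hw, hA3, hB3]; norm_num
  have hLqq : SONCAux.L xp xm (q * q) = -2 := by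
    rw [hq]
    simp only [add_mul, mul_add, monomial_mul, map_add, SONCAux.L_monomial]
    rw [hw11, hw12, hw13, hw21, hw22, hw23, hw31, hw32, hw33]
    norm_num
  have hLge : (0 : ℝ) ≤ SONCAux.L xp xm (q * q) := by
    rw [heq, map_sum]
    refine Finset.sum_nonneg fun i _ => ?_
    obtain ⟨⟨r, α, β, cf, c, lam, hrn, hcf, _, _, _, _, _, hrep⟩, hpnn⟩ := (hp i).1
    refine SONCAux.L_nonneg xp xm _ (fun x => ?_) β (fun γ hγ => ?_)
    · rw [eval_mul, eval_C]
      exact mul_nonneg (hμ i) (hpnn x)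
    · rw [coeff_C_mul]
      refine mul_nonneg (hμ i) ?_
      rw [hrep, coeff_add, coeff_monomial, if_neg (fun h => hγ h.symm), add_zero, coeff_sum]
      refine Finset.sum_nonneg fun j _ => ?_
      rw [coeff_monomial]
      split
      · exact (hcf j).le
      · exact le_refl 0
  rw [hLqq] at hLge
  norm_num at hLge
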